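/- Fix an integer m ≥ 2 and an even integer n ≥ 2. Let Λ = {a ∈ ℤ^m : Σ_i a_i ∈ 2ℤ} and Λ^♯ = {μ ∈ Λ : Σ_i μ_i ν_i ∈ nℤ for all ν ∈ Λ}. Let P = ℤ^m + ℤ·(1/2, …, 1/2) ⊂ ℚ^m, so that P/ℤ^m ≅ ℤ/2ℤ. Consider the homomorphism f : Λ^♯ → P/ℤ^m, μ ↦ (1/n)μ mod ℤ^m. If nm/2 is even, then f is surjective with kernel nℤ^m, and hence induces an isomorphism Λ^♯/nℤ^m ≅ P/ℤ^m ≅ ℤ/2ℤ. If nm/2 is odd, then Λ^♯ = nℤ^m and f is identically zero; in particular f is not surjective, even though P/ℤ^m ≅ ℤ/2ℤ is nonzero and killed by n. -/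

import Mathlib

/-- `Λ^♯ = {μ ∈ Λ : Σ μᵢνᵢ ∈ nℤ for all ν ∈ Λ}` where `Λ = {a ∈ ℤ^m : Σ aᵢ even}`. -/
def spinSharp (m n : ℕ) : AddSubgroup (Fin m → ℤ) where
  carrier := {μ | ((2 : ℤ) ∣ ∑ i, μ i) ∧
    ∀ ν : Fin m → ℤ, ((2 : ℤ) ∣ ∑ i, ν i) → (n : ℤ) ∣ ∑ i, μ i * ν i}
  zero_mem' := by
    refine ⟨by simp, ?_⟩
    intro ν hν
    simp
  add_mem' := by
    intro a b ha hb
    refine ⟨by simpa [Finset.sum_add_distrib] using dvd_add ha.1 hb.1, ?_⟩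
    intro ν hν
    simpa [add_mul, Finset.sum_add_distrib] using dvd_add (ha.2 ν hν) (hb.2 ν hν)
  neg_mem' := by
    intro a ha
    refine ⟨by simpa [Finset.sum_neg_distrib] using ha.1, ?_⟩
    intro ν hν
    simpa [neg_mul, Finset.sum_neg_distrib] using ha.2 ν hν

/-- The lattice `ℤ^m` viewed inside `ℚ^m`. -/
def intPoints (m : ℕ) : AddSubgroup (Fin m → ℚ) where
  carrier := {v | ∀ i, ∃ z : ℤ, v i = (z : ℚ)}
  zero_mem' := by intro i; exact ⟨0, by simp⟩
  add_mem' := by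
    intro a b ha hb i
    obtain ⟨x, hx⟩ := ha i
    obtain ⟨y, hy⟩ := hb i
    exact ⟨x + y, by simp [hx, hy]⟩
  neg_mem' := by
    intro a ha i
    obtain ⟨x, hx⟩ := ha i
    exact ⟨-x, by simp [hx]⟩

/-- `P = ℤ^m + ℤ·(1/2, …, 1/2) ⊂ ℚ^m`. -/
def halfLattice (m : ℕ) : AddSubgroup (Fin m → ℚ) :=
  intPoints m ⊔ AddSubgroup.zmultiples (fun _ => (1 / 2 : ℚ))

namespace SpinAux

lemma char_mem {m n : ℕ} (hm : 1 ≤ m) (μ : Fin m → ℤ) :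
    μ ∈ spinSharp m n ↔ ((2:ℤ) ∣ ∑ i, μ i) ∧ (∀ i, (n:ℤ) ∣ 2 * μ i) ∧
      (∀ i j, (n:ℤ) ∣ μ i - μ j) := by
  constructor
  · rintro ⟨h2, hp⟩
    refine ⟨h2, ?_, ?_⟩
    · intro i
      have := hp (fun j => if j = i then 2 else 0) (by simp)
      simpa [mul_ite, Finset.sum_ite_eq', mul_comm] using this
    · intro i j
      have := hp (fun l => (if l = i then 1 else 0) - (if l = j then 1 else 0))
        (by simp [Finset.sum_sub_distrib])
      simpa [mul_sub, mul_ite, Finset.sum_sub_distrib, Finset.sum_ite_eq'] using this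
  · rintro ⟨h2, hdbl, hdiff⟩
    refine ⟨h2, fun ν hν => ?_⟩
    set i0 : Fin m := ⟨0, hm⟩
    have key : ∑ i, μ i * ν i = (∑ i, (μ i - μ i0) * ν i) + μ i0 * ∑ i, ν i := by
      rw [Finset.mul_sum, ← Finset.sum_add_distrib]
      exact Finset.sum_congr rfl fun i _ => by ring
    rw [key]
    refine dvd_add (Finset.dvd_sum fun i _ => (hdiff i i0).mul_right _) ?_
    obtain ⟨t, ht⟩ := hν
    rw [ht, show μ i0 * (2 * t) = (2 * μ i0) * t by ring]
    exact (hdbl i0).mul_right t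

lemma dichotomy {m n k : ℕ} (hk : 1 ≤ k) (hn : n = 2*k) (hm : 1 ≤ m) {μ : Fin m → ℤ}
    (hμ : μ ∈ spinSharp m n) :
    (∀ i, (n:ℤ) ∣ μ i) ∨ (∀ i, (n:ℤ) ∣ μ i - k) := by
  obtain ⟨h2, hdbl, hdiff⟩ := (char_mem hm μ).1 hμ
  set i0 : Fin m := ⟨0, hm⟩
  obtain ⟨c, hc⟩ := hdbl i0
  have hnk : (n:ℤ) = 2 * k := by exact_mod_cast congrArg (Nat.cast : ℕ → ℤ) hn
  have hkc : μ i0 = k * c := by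
    have : 2 * μ i0 = 2 * (k * c) := by rw [hc, hnk]; ring
    omega
  rcases Int.even_or_odd c with ⟨d, hd⟩ | ⟨d, hd⟩
  · left
    intro i
    have h0 : (n:ℤ) ∣ μ i0 := ⟨d, by rw [hkc, hd, hnk]; ring⟩
    have := dvd_add (hdiff i i0) h0
    simpa using this
  · right
    intro i
    have h0 : (n:ℤ) ∣ μ i0 - k := ⟨d, by rw [hkc, hd, hnk]; ring⟩
    have := dvd_add (hdiff i i0) h0
    simpa using this

lemma nmul_mem {m n : ℕ} (hn2 : 2 ∣ n) {μ : Fin m → ℤ} (h : ∀ i, (n:ℤ) ∣ μ i) :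
    μ ∈ spinSharp m n := by
  constructor
  · exact dvd_trans (by exact_mod_cast hn2) (Finset.dvd_sum fun i _ => h i)
  · intro ν hν
    exact Finset.dvd_sum fun i _ => (h i).mul_right _

lemma half_mem {m : ℕ} : (fun _ => (1/2:ℚ)) ∈ halfLattice m :=
  (le_sup_right : AddSubgroup.zmultiples _ ≤ halfLattice m) (AddSubgroup.mem_zmultiples _)

lemma int_le_half {m : ℕ} : intPoints m ≤ halfLattice m := le_sup_left

lemma cast_nk {n k : ℕ} (hn : n = 2*k) : (n:ℤ) = 2*k := by exact_mod_cast hn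

lemma w_mem {m n k : ℕ} (hk : 1 ≤ k) (hn : n = 2*k) (hm : 1 ≤ m) {μ : Fin m → ℤ}
    (hμ : μ ∈ spinSharp m n) : (fun i => (μ i : ℚ)/n) ∈ halfLattice m := by
  have hn0 : (n:ℚ) ≠ 0 := by
    have : 0 < n := by omega
    exact_mod_cast this.ne'
  rcases dichotomy hk hn hm hμ with h | h
  · refine int_le_half fun i => ?_
    obtain ⟨c, hc⟩ := h i
    exact ⟨c, by rw [hc]; push_cast; field_simp⟩
  · have heq : (fun i => (μ i : ℚ)/n) =
        (fun i => ((μ i : ℚ) - k)/n) + (fun _ => (1/2:ℚ)) := by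
      funext i
      have hnq : (n:ℚ) = 2*k := by exact_mod_cast hn
      have hk0 : (k:ℚ) ≠ 0 := by
        have : 0 < k := hk
        exact_mod_cast this.ne'
      rw [Pi.add_apply]
      rw [hnq]
      field_simp
      ring
    rw [heq]
    refine add_mem (int_le_half fun i => ?_) half_mem
    obtain ⟨c, hc⟩ := h i
    refine ⟨c, ?_⟩
    have : (μ i : ℚ) - k = n * c := by exact_mod_cast hc
    rw [this]; field_simp

lemma dvd_of_div_int {n : ℕ} (hn0 : (n:ℚ) ≠ 0) {a : ℤ} {z : ℤ}
    (h : (a:ℚ)/n = z) : (n:ℤ) ∣ a := by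
  refine ⟨z, ?_⟩
  have h2 : (a:ℚ) = n * z := by
    field_simp at h
    rw [h]
  exact_mod_cast h2

noncomputable def fmap (m n k : ℕ) (hk : 1 ≤ k) (hn : n = 2*k) (hm : 1 ≤ m) :
    ↥(spinSharp m n) →+ (↥(halfLattice m) ⧸ (intPoints m).addSubgroupOf (halfLattice m)) where
  toFun μ := QuotientAddGroup.mk ⟨fun i => ((μ : Fin m → ℤ) i : ℚ)/n, w_mem hk hn hm μ.2⟩
  map_zero' := by
    have h0 : QuotientAddGroup.mk (0 : halfLattice m) =
        (0 : ↥(halfLattice m) ⧸ (intPoints m).addSubgroupOf (halfLattice m)) := rfl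
    rw [← h0]
    apply congrArg QuotientAddGroup.mk
    apply Subtype.ext
    funext i
    simp
  map_add' a b := by
    rw [← QuotientAddGroup.mk_add]
    apply congrArg QuotientAddGroup.mk
    apply Subtype.ext
    funext i
    simp [add_div]

lemma fmap_spec (m n k : ℕ) (hk : 1 ≤ k) (hn : n = 2*k) (hm : 1 ≤ m)
    (μ : spinSharp m n) (v : halfLattice m)
    (hv : ∀ i, (n : ℚ) * (v : Fin m → ℚ) i = ((μ : Fin m → ℤ) i : ℚ)) :
    fmap m n k hk hn hm μ = QuotientAddGroup.mk v := by
  have hn0 : (n:ℚ) ≠ 0 := by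
    have : 0 < n := by omega
    exact_mod_cast this.ne'
  show QuotientAddGroup.mk _ = _
  apply congrArg QuotientAddGroup.mk
  apply Subtype.ext
  funext i
  show ((μ : Fin m → ℤ) i : ℚ)/n = (v : Fin m → ℚ) i
  rw [eq_comm, eq_div_iff hn0, mul_comm]
  exact hv i

lemma fmap_zero_iff (m n k : ℕ) (hk : 1 ≤ k) (hn : n = 2*k) (hm : 1 ≤ m)
    (μ : spinSharp m n) :
    fmap m n k hk hn hm μ = 0 ↔ ∀ i, (n : ℤ) ∣ (μ : Fin m → ℤ) i := by
  have hn0 : (n:ℚ) ≠ 0 := by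
    have : 0 < n := by omega
    exact_mod_cast this.ne'
  show QuotientAddGroup.mk _ = 0 ↔ _
  rw [QuotientAddGroup.eq_zero_iff, AddSubgroup.mem_addSubgroupOf]
  constructor
  · intro h i
    obtain ⟨z, hz⟩ := h i
    exact dvd_of_div_int hn0 hz
  · intro h i
    obtain ⟨c, hc⟩ := h i
    refine ⟨c, ?_⟩
    show ((μ : Fin m → ℤ) i : ℚ)/n = c
    rw [hc]; push_cast; field_simp

/-- the nontrivial element of `P/ℤ^m` -/
noncomputable def helt (m : ℕ) : ↥(halfLattice m) ⧸ (intPoints m).addSubgroupOf (halfLattice m) :=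
  QuotientAddGroup.mk ⟨fun _ => (1/2:ℚ), half_mem⟩

lemma helt_ne_zero (m : ℕ) (hm : 1 ≤ m) : helt m ≠ 0 := by
  intro h
  rw [helt, QuotientAddGroup.eq_zero_iff, AddSubgroup.mem_addSubgroupOf] at h
  obtain ⟨z, hz⟩ := h ⟨0, hm⟩
  have : (1:ℚ) = 2 * z := by rw [← hz]; norm_num
  have h2 : (1:ℤ) = 2 * z := by exact_mod_cast this
  omega

lemma two_helt (m : ℕ) : helt m + helt m = 0 := by
  rw [helt, ← QuotientAddGroup.mk_add, QuotientAddGroup.eq_zero_iff,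
    AddSubgroup.mem_addSubgroupOf]
  intro i
  exact ⟨1, by norm_num⟩

lemma classify (m : ℕ)
    (x : ↥(halfLattice m) ⧸ (intPoints m).addSubgroupOf (halfLattice m)) :
    x = 0 ∨ x = helt m := by
  induction x using QuotientAddGroup.induction_on with
  | _ v =>
  have hv := AddSubgroup.mem_sup.1 v.2
  obtain ⟨y, hy, z, hz, hyz⟩ := hv
  obtain ⟨t, rfl⟩ := AddSubgroup.mem_zmultiples_iff.1 hz
  set hh : halfLattice m := ⟨fun _ => (1/2:ℚ), half_mem⟩ with hhdef
  have hmk : (QuotientAddGroup.mk v :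
      ↥(halfLattice m) ⧸ (intPoints m).addSubgroupOf (halfLattice m)) =
      QuotientAddGroup.mk (t • hh) := by
    symm
    rw [QuotientAddGroup.eq, AddSubgroup.mem_addSubgroupOf]
    have : ((-(t • hh) + v : halfLattice m) : Fin m → ℚ) = y := by
      push_cast
      rw [← hyz]
      abel
    rw [this]
    exact hy
  have hsm : (QuotientAddGroup.mk (t • hh) :
      ↥(halfLattice m) ⧸ (intPoints m).addSubgroupOf (halfLattice m)) = t • helt m := by
    exact AddMonoidHom.map_zsmul
      (QuotientAddGroup.mk' ((intPoints m).addSubgroupOf (halfLattice m))) t hh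
  rw [hmk, hsm]
  rcases Int.even_or_odd t with ⟨q, hq⟩ | ⟨q, hq⟩
  · left
    rw [hq, add_zsmul]
    rw [show q • helt m + q • helt m = q • (helt m + helt m) by rw [zsmul_add]]
    rw [two_helt, smul_zero]
  · right
    have h2q : ((2:ℤ)*q) • helt m = 0 := by
      rw [show (2:ℤ)*q = q + q by ring, add_zsmul, ← zsmul_add, two_helt, smul_zero]
    rw [hq, add_zsmul, one_zsmul, h2q, zero_add]

lemma card_two (m : ℕ) (hm : 1 ≤ m) :
    Nat.card (↥(halfLattice m) ⧸ (intPoints m).addSubgroupOf (halfLattice m)) = 2 := by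
  rw [Nat.card_eq_two_iff]
  refine ⟨0, helt m, fun h => helt_ne_zero m hm h.symm, ?_⟩
  refine Set.eq_univ_iff_forall.2 fun x => ?_
  rcases classify m x with h | h <;> simp [h]

lemma torsion (m n k : ℕ) (hn : n = 2*k)
    (y : ↥(halfLattice m) ⧸ (intPoints m).addSubgroupOf (halfLattice m)) :
    n • y = 0 := by
  induction y using QuotientAddGroup.induction_on with
  | _ v =>
  rcases classify m (QuotientAddGroup.mk v) with h | h
  · rw [h, smul_zero]
  · rw [h, hn, mul_comm, mul_smul]
    have h2 : (2 : ℕ) • helt m = 0 := by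
      rw [two_nsmul, two_helt]
    rw [h2, smul_zero]

end SpinAux

open SpinAux

/-- For `G = Spin_{2m+1}` and `n = 2k` even: the homomorphism `f : Λ^♯ → P/ℤ^m`,
`μ ↦ (1/n)μ mod ℤ^m`, is surjective with kernel `nℤ^m` (inducing `Λ^♯/nℤ^m ≅ P/ℤ^m ≅ ℤ/2`)
when `nm/2` is even, while when `nm/2` is odd one has `Λ^♯ = nℤ^m` and `f ≡ 0`, so `f` is
not surjective even though `P/ℤ^m ≅ ℤ/2` is nonzero and killed by `n`. -/
theorem spin_sharp_cocenter_map (m n k : ℕ) (hm : 2 ≤ m) (hk : 1 ≤ k) (hn : n = 2 * k) :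
    ∃ f : ↥(spinSharp m n) →+
        (↥(halfLattice m) ⧸ (intPoints m).addSubgroupOf (halfLattice m)),
      (∀ μ : spinSharp m n, ∃ v : halfLattice m,
        ∀ i, (n : ℚ) * (v : Fin m → ℚ) i = ((μ : Fin m → ℤ) i : ℚ)) ∧
      (∀ (μ : spinSharp m n) (v : halfLattice m),
        (∀ i, (n : ℚ) * (v : Fin m → ℚ) i = ((μ : Fin m → ℤ) i : ℚ)) →
          f μ = QuotientAddGroup.mk v) ∧
      (Even (k * m) →
        Function.Surjective f ∧
        (∀ μ : spinSharp m n, f μ = 0 ↔ ∀ i, (n : ℤ) ∣ (μ : Fin m → ℤ) i) ∧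
        ∃ e : (↥(spinSharp m n) ⧸ f.ker) ≃+
            (↥(halfLattice m) ⧸ (intPoints m).addSubgroupOf (halfLattice m)),
          ∀ μ : spinSharp m n, e (QuotientAddGroup.mk μ) = f μ) ∧
      (Odd (k * m) →
        (∀ μ : Fin m → ℤ, μ ∈ spinSharp m n ↔ ∀ i, (n : ℤ) ∣ μ i) ∧
        (∀ μ : spinSharp m n, f μ = 0) ∧
        ¬ Function.Surjective f) ∧
      Nat.card (↥(halfLattice m) ⧸ (intPoints m).addSubgroupOf (halfLattice m)) = 2 ∧
      (∀ y : ↥(halfLattice m) ⧸ (intPoints m).addSubgroupOf (halfLattice m),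
        n • y = 0) := by
  have hm1 : 1 ≤ m := by omega
  have hn0 : (n:ℚ) ≠ 0 := by
    have : 0 < n := by omega
    exact_mod_cast this.ne'
  have hnZ : (n:ℤ) = 2*k := cast_nk hn
  refine ⟨fmap m n k hk hn hm1, ?_, fmap_spec m n k hk hn hm1, ?_, ?_,
    card_two m hm1, torsion m n k hn⟩
  · -- existence of v
    intro μ
    refine ⟨⟨fun i => ((μ : Fin m → ℤ) i : ℚ)/n, w_mem hk hn hm1 μ.2⟩, fun i => ?_⟩
    show (n:ℚ) * (((μ : Fin m → ℤ) i : ℚ)/n) = _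
    field_simp
  · -- even case
    intro heven
    have hμstar : (fun _ => (k:ℤ)) ∈ spinSharp m n := by
      rw [char_mem hm1]
      refine ⟨?_, fun i => ⟨1, by rw [hnZ]; ring⟩, fun i j => by simp⟩
      have hsum : ∑ _i : Fin m, (k:ℤ) = (m:ℤ) * k := by
        simp [Finset.sum_const, mul_comm]
      rw [hsum]
      have h2 : (2:ℕ) ∣ m * k := by obtain ⟨c, hc⟩ := heven; exact ⟨c, by rw [mul_comm]; omega⟩
      exact_mod_cast Int.natCast_dvd_natCast.2 h2
    have hfstar : fmap m n k hk hn hm1 ⟨_, hμstar⟩ = helt m := by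
      apply fmap_spec
      intro i
      show (n:ℚ) * (1/2) = (k:ℤ)
      have : (n:ℚ) = 2*k := by exact_mod_cast hn
      rw [this]; push_cast; ring
    have hsurj : Function.Surjective (fmap m n k hk hn hm1) := by
      intro y
      rcases classify m y with h | h
      · exact ⟨0, by rw [map_zero, h]⟩
      · exact ⟨⟨_, hμstar⟩, by rw [hfstar, h]⟩
    refine ⟨hsurj, fmap_zero_iff m n k hk hn hm1, ?_⟩
    refine ⟨QuotientAddGroup.quotientKerEquivOfSurjective _ hsurj, fun μ => ?_⟩
    rfl
  · -- odd case
    intro hodd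
    have hmem : ∀ μ : Fin m → ℤ, μ ∈ spinSharp m n ↔ ∀ i, (n : ℤ) ∣ μ i := by
      intro μ
      constructor
      · intro hμ
        rcases dichotomy hk hn hm1 hμ with h | h
        · exact h
        · exfalso
          have h2 : (2:ℤ) ∣ ∑ i, μ i := ((char_mem hm1 μ).1 hμ).1
          have hs : ∑ i, μ i = (∑ i, (μ i - (k:ℤ))) + m * k := by
            rw [Finset.sum_sub_distrib]
            have : ∑ _i : Fin m, (k:ℤ) = (m:ℤ) * k := by
              simp [Finset.sum_const, mul_comm]
            rw [this]; ring
          have hd2 : (2:ℤ) ∣ ∑ i, (μ i - (k:ℤ)) :=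
            Finset.dvd_sum fun i _ => dvd_trans ⟨k, hnZ⟩ (h i)
          have hmk : (2:ℤ) ∣ (m:ℤ) * k := by
            have := dvd_sub h2 hd2
            rw [hs] at this
            simpa using this
          obtain ⟨c, hc⟩ := hmk
          obtain ⟨j, hj⟩ := hodd
          have hkm : (k:ℤ) * m = 2 * j + 1 := by exact_mod_cast hj
          have : (2:ℤ)*c = 2*j+1 := by linarith [mul_comm (m:ℤ) k]
          omega
      · exact nmul_mem ⟨k, hn⟩
    refine ⟨hmem, fun μ => (fmap_zero_iff m n k hk hn hm1 μ).2 ((hmem μ).1 μ.2), ?_⟩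
    intro hsurj
    obtain ⟨μ, hμ⟩ := hsurj (helt m)
    exact helt_ne_zero m hm1
      (hμ ▸ (fmap_zero_iff m n k hk hn hm1 μ).2 ((hmem μ).1 μ.2))
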